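/- There exists a constant C > 0 such that for all L divisible by 4 with L ≥ 8, the sum over all pairs (j,k), 0 ≤ j,k ≤ L−1, with λ_j ≠ λ_k of 1/|λ_j − λ_k|, where λ_j = -2cos(2πj/L), is at most C·L²·(log L)². -/

import Mathlib

open Finset Real

namespace Stmt11

noncomputable def w (L u : ℕ) : ℝ := ((max 1 (min u (L - u)) : ℕ) : ℝ)⁻¹

lemma w_pos (L u : ℕ) : 0 < w L u := by
  have h : (0:ℝ) < ((max 1 (min u (L - u)) : ℕ) : ℝ) := by
    exact_mod_cast Nat.lt_of_lt_of_le Nat.zero_lt_one (le_max_left _ _)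
  exact inv_pos.mpr h

lemma half_sin (L r : ℕ) (hL : 0 < L) (h2r : 2 * r ≤ L) :
    2 * (r : ℝ) / L ≤ Real.sin (π * r / L) := by
  have hLpos : (0:ℝ) < L := by exact_mod_cast hL
  have hr2 : (r:ℝ) * 2 ≤ L := by exact_mod_cast (by omega : r * 2 ≤ L)
  have hx0 : 0 ≤ π * r / L := by positivity
  have hx1 : π * r / L ≤ π / 2 := by
    rw [div_le_div_iff₀ hLpos two_pos]
    nlinarith [Real.pi_pos]
  have h := Real.mul_le_sin hx0 hx1
  calc 2 * (r:ℝ)/L = 2/π * (π * r / L) := by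
        field_simp
    _ ≤ _ := h

lemma sin_lb (L r : ℕ) (hL : 0 < L) (hr : r < L) :
    2 * ((min r (L - r) : ℕ) : ℝ) / L ≤ Real.sin (π * r / L) := by
  rcases le_or_gt (2*r) L with h | h
  · rw [show min r (L - r) = r by omega]
    exact half_sin L r hL h
  · rw [show min r (L - r) = L - r by omega]
    have hcast : ((L - r : ℕ) : ℝ) = (L:ℝ) - r := by
      push_cast [Nat.cast_sub hr.le]; ring
    have he : Real.sin (π * r / L) = Real.sin (π * ((L - r : ℕ):ℝ) / L) := by
      rw [hcast, show π * ((L:ℝ) - r)/L = π - π * r / L by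
        have hLpos : (0:ℝ) < L := by exact_mod_cast hL
        field_simp, Real.sin_pi_sub]
    rw [he]
    exact half_sin L (L - r) hL (by omega)

lemma sin_abs_mod (L n : ℕ) (hL : 0 < L) :
    |Real.sin (π * n / L)| = |Real.sin (π * ((n % L : ℕ):ℝ) / L)| := by
  have hLpos : (0:ℝ) < L := by exact_mod_cast hL
  have hn : (n:ℝ) = ((n % L : ℕ):ℝ) + ((n / L : ℕ):ℝ) * L := by
    exact_mod_cast (Nat.mod_add_div' n L).symm
  have key : π * n / L = π * ((n % L : ℕ):ℝ)/L + ((n / L : ℕ):ℝ) * π := by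
    rw [hn]; field_simp
  rw [key, Real.sin_add_nat_mul_pi, abs_mul]
  simp

lemma key (L : ℕ) (hL : 8 ≤ L) (a b : ℕ) (ha : a < L) (hb : b < L)
    (hs : (a + b) % L ≠ 0) (ht : (a + L - b) % L ≠ 0) :
    |-2 * Real.cos (2 * π * a / L) - -2 * Real.cos (2 * π * b / L)|⁻¹
      ≤ (L:ℝ)^2 * w L ((a + b) % L) * w L ((a + L - b) % L) := by
  have hL0 : 0 < L := by omega
  have hLpos : (0:ℝ) < L := by exact_mod_cast hL0
  set s := (a + b) % L with hs_def
  set t := (a + L - b) % L with ht_def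
  have hsL : s < L := Nat.mod_lt _ hL0
  have htL : t < L := Nat.mod_lt _ hL0
  set ms := min s (L - s) with hms_def
  set mt := min t (L - t) with hmt_def
  have hms1 : 1 ≤ ms := by omega
  have hmt1 : 1 ≤ mt := by omega
  have hms1R : (1:ℝ) ≤ (ms:ℝ) := by exact_mod_cast hms1
  have hmt1R : (1:ℝ) ≤ (mt:ℝ) := by exact_mod_cast hmt1
  have e1 : (2*π*(b:ℝ)/L + 2*π*(a:ℝ)/L)/2 = π * ((a+b:ℕ):ℝ)/L := by
    push_cast; field_simp; ring
  have e2 : (2*π*(b:ℝ)/L - 2*π*(a:ℝ)/L)/2 = π - π * ((a + L - b : ℕ):ℝ)/L := by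
    push_cast [show b ≤ a + L by omega]
    field_simp; ring
  have hD : -2 * Real.cos (2 * π * (a:ℝ) / L) - -2 * Real.cos (2 * π * (b:ℝ) / L)
      = 2 * (Real.cos (2*π*(b:ℝ)/L) - Real.cos (2*π*(a:ℝ)/L)) := by ring
  have habs : |-2 * Real.cos (2 * π * (a:ℝ) / L) - -2 * Real.cos (2 * π * (b:ℝ) / L)|
      = 4 * (|Real.sin (π * ((a+b:ℕ):ℝ)/L)| * |Real.sin (π * ((a + L - b:ℕ):ℝ)/L)|) := by
    rw [hD, Real.cos_sub_cos, e1, e2, Real.sin_pi_sub]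
    rw [show 2 * (-2 * Real.sin (π * ((a+b:ℕ):ℝ)/L) * Real.sin (π * ((a + L - b:ℕ):ℝ)/L))
        = -(4 * (Real.sin (π * ((a+b:ℕ):ℝ)/L) * Real.sin (π * ((a + L - b:ℕ):ℝ)/L))) by ring,
      abs_neg, abs_mul, abs_mul]
    norm_num
  have hS1 : 2 * (ms:ℝ)/L ≤ |Real.sin (π * ((a+b:ℕ):ℝ)/L)| := by
    rw [sin_abs_mod L (a+b) hL0, abs_of_nonneg]
    · exact sin_lb L s hL0 hsL
    · apply Real.sin_nonneg_of_nonneg_of_le_pi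
      · positivity
      · have hsR : (s:ℝ) ≤ L := by exact_mod_cast hsL.le
        rw [div_le_iff₀ hLpos] at *
        nlinarith [Real.pi_pos]
  have hS2 : 2 * (mt:ℝ)/L ≤ |Real.sin (π * ((a + L - b:ℕ):ℝ)/L)| := by
    rw [sin_abs_mod L (a + L - b) hL0, abs_of_nonneg]
    · exact sin_lb L t hL0 htL
    · apply Real.sin_nonneg_of_nonneg_of_le_pi
      · positivity
      · have htR : (t:ℝ) ≤ L := by exact_mod_cast htL.le
        rw [div_le_iff₀ hLpos] at *
        nlinarith [Real.pi_pos]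
  have hD4 : 16 * (ms:ℝ) * (mt:ℝ) / (L:ℝ)^2
      ≤ |-2 * Real.cos (2 * π * (a:ℝ) / L) - -2 * Real.cos (2 * π * (b:ℝ) / L)| := by
    rw [habs]
    have hmul := mul_le_mul hS1 hS2 (by positivity) (abs_nonneg _)
    calc 16 * (ms:ℝ) * (mt:ℝ) / (L:ℝ)^2 = 4 * ((2*(ms:ℝ)/L) * (2*(mt:ℝ)/L)) := by
          field_simp; ring
      _ ≤ _ := by linarith
  have hpos : (0:ℝ) < 16 * (ms:ℝ) * (mt:ℝ) / (L:ℝ)^2 := by positivity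
  calc |-2 * Real.cos (2 * π * (a:ℝ) / L) - -2 * Real.cos (2 * π * (b:ℝ) / L)|⁻¹
      ≤ (16 * (ms:ℝ) * (mt:ℝ) / (L:ℝ)^2)⁻¹ := inv_anti₀ hpos hD4
    _ = (L:ℝ)^2 / (16 * (ms:ℝ) * (mt:ℝ)) := by rw [inv_div]
    _ ≤ (L:ℝ)^2 * ((ms:ℝ)⁻¹ * (mt:ℝ)⁻¹) := by
        rw [div_eq_mul_inv]
        apply mul_le_mul_of_nonneg_left _ (by positivity)
        rw [← mul_inv]
        exact inv_anti₀ (by positivity) (by nlinarith)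
    _ = (L:ℝ)^2 * w L s * w L t := by
        rw [w, w, show max 1 (min s (L-s)) = ms by omega,
          show max 1 (min t (L-t)) = mt by omega]
        ring

lemma cancel_half (L : ℕ) (hL2 : 2 ∣ L) (j j' k k' : ℕ)
    (hj : j < L) (hk : k < L) (hj' : j' < L) (hk' : k' < L)
    (hhalf : j < L/2 ↔ j' < L/2)
    (h1 : (j + k) % L = (j' + k') % L)
    (h2 : (j + L - k) % L = (j' + L - k') % L) : j = j' ∧ k = k' := by
  have hL0 : 0 < L := by omega
  have h3 : (2*j + L) % L = (2*j' + L) % L := by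
    have hadd := Nat.ModEq.add h1 h2
    rwa [show j + k + (j + L - k) = 2*j + L by omega,
      show j' + k' + (j' + L - k') = 2*j' + L by omega] at hadd
  have h4 : (2*j) % L = (2*j') % L := by
    simpa [Nat.add_mod_right] using h3
  have hjj : j = j' := by
    obtain ⟨m, hm⟩ := hL2
    by_cases hc : j < L/2
    · have hc' : j' < L/2 := hhalf.mp hc
      rw [Nat.mod_eq_of_lt (by omega), Nat.mod_eq_of_lt (by omega)] at h4
      omega
    · have hc' : ¬ j' < L/2 := fun h => hc (hhalf.mpr h)
      rw [Nat.mod_eq_sub_mod (by omega), Nat.mod_eq_of_lt (by omega)] at h4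
      rw [Nat.mod_eq_sub_mod (by omega), Nat.mod_eq_of_lt (by omega)] at h4
      omega
  subst hjj
  refine ⟨rfl, ?_⟩
  have h5 : k % L = k' % L := Nat.ModEq.add_left_cancel' j h1
  rwa [Nat.mod_eq_of_lt hk, Nat.mod_eq_of_lt hk'] at h5

lemma comb (L : ℕ) (hL2 : 2 ∣ L) (hL0 : 0 < L) (f : ℕ → ℝ) (hf : ∀ n, 0 ≤ f n) :
    ∑ j : Fin L, ∑ k : Fin L, f ((j.1 + k.1) % L) * f ((j.1 + L - k.1) % L)
      ≤ 2 * (∑ u ∈ range L, f u) ^ 2 := by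
  set g : Fin L × Fin L → ℕ × ℕ :=
    fun p => ((p.1.1 + p.2.1) % L, (p.1.1 + L - p.2.1) % L) with hg
  have hmain : ∀ P : Finset (Fin L × Fin L),
      (∀ p ∈ P, ∀ q ∈ P, (p.1.1 < L/2 ↔ q.1.1 < L/2)) →
      ∑ p ∈ P, f (g p).1 * f (g p).2 ≤ (∑ u ∈ range L, f u)^2 := by
    intro P hP
    have hinj : ∀ p ∈ P, ∀ q ∈ P, g p = g q → p = q := by
      intro p hp q hq hgpq
      rw [Prod.ext_iff] at hgpq
      obtain ⟨hjj, hkk⟩ := cancel_half L hL2 p.1.1 q.1.1 p.2.1 q.2.1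
        p.1.2 p.2.2 q.1.2 q.2.2 (hP p hp q hq) hgpq.1 hgpq.2
      ext
      · exact hjj
      · exact hkk
    have himg : ∑ p ∈ P, f (g p).1 * f (g p).2 = ∑ q ∈ P.image g, f q.1 * f q.2 :=
      (Finset.sum_image (f := fun q : ℕ × ℕ => f q.1 * f q.2) hinj).symm
    rw [himg]
    have hsub : P.image g ⊆ range L ×ˢ range L := by
      intro q hq
      simp only [Finset.mem_image] at hq
      obtain ⟨p, hp, rfl⟩ := hq
      simp only [Finset.mem_product, Finset.mem_range]
      exact ⟨Nat.mod_lt _ hL0, Nat.mod_lt _ hL0⟩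
    calc ∑ q ∈ P.image g, f q.1 * f q.2
        ≤ ∑ q ∈ range L ×ˢ range L, f q.1 * f q.2 :=
          Finset.sum_le_sum_of_subset_of_nonneg hsub
            (fun q _ _ => mul_nonneg (hf _) (hf _))
      _ = (∑ u ∈ range L, f u)^2 := by
          rw [sq, Finset.sum_mul_sum, ← Finset.sum_product']
  have hsplit : ∑ j : Fin L, ∑ k : Fin L, f ((j.1 + k.1) % L) * f ((j.1 + L - k.1) % L)
      = ∑ p ∈ Finset.univ.filter (fun p : Fin L × Fin L => p.1.1 < L/2),
          f (g p).1 * f (g p).2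
        + ∑ p ∈ Finset.univ.filter (fun p : Fin L × Fin L => ¬ p.1.1 < L/2),
          f (g p).1 * f (g p).2 := by
    rw [Finset.sum_filter_add_sum_filter_not, Fintype.sum_prod_type]
  rw [hsplit]
  have hb1 := hmain (Finset.univ.filter (fun p : Fin L × Fin L => p.1.1 < L/2)) (by
    intro p hp q hq
    simp only [Finset.mem_filter] at hp hq
    exact iff_of_true hp.2 hq.2)
  have hb2 := hmain (Finset.univ.filter (fun p : Fin L × Fin L => ¬ p.1.1 < L/2)) (by
    intro p hp q hq
    simp only [Finset.mem_filter] at hp hq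
    exact iff_of_false hp.2 hq.2)
  nlinarith [hb1, hb2]

lemma sumw (L : ℕ) (hL : 8 ≤ L) : ∑ u ∈ range L, w L u ≤ 6 * Real.log L := by
  have hH : ∑ i ∈ range L, ((i:ℝ)+1)⁻¹ ≤ 1 + Real.log L := by
    have h1 := harmonic_le_one_add_log L
    have h0 : ((harmonic L : ℚ) : ℝ) = ∑ i ∈ range L, ((i:ℝ)+1)⁻¹ := by
      rw [harmonic]
      push_cast
      rfl
    linarith [h0 ▸ h1]
  have hterm : ∀ u, w L u ≤ 2*((u:ℝ)+1)⁻¹ + 2*(((L-u:ℕ):ℝ)+1)⁻¹ := by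
    have keyv : ∀ v : ℕ, ((max 1 v : ℕ):ℝ)⁻¹ ≤ 2 * ((v:ℝ)+1)⁻¹ := by
      intro v
      have h1 : ((v:ℝ)+1)/2 ≤ ((max 1 v : ℕ):ℝ) := by
        have : v + 1 ≤ 2 * max 1 v := by omega
        have h2 : ((v:ℝ)+1) ≤ 2 * ((max 1 v : ℕ):ℝ) := by exact_mod_cast this
        linarith
      calc ((max 1 v : ℕ):ℝ)⁻¹ ≤ (((v:ℝ)+1)/2)⁻¹ :=
            inv_anti₀ (by positivity) h1
        _ = 2 * ((v:ℝ)+1)⁻¹ := by rw [inv_div]; ring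
    intro u
    have hnn1 : (0:ℝ) ≤ 2*((u:ℝ)+1)⁻¹ := by positivity
    have hnn2 : (0:ℝ) ≤ 2*(((L-u:ℕ):ℝ)+1)⁻¹ := by positivity
    rcases min_choice u (L - u) with hmin | hmin
    · calc w L u = ((max 1 u : ℕ):ℝ)⁻¹ := by rw [w, hmin]
        _ ≤ 2*((u:ℝ)+1)⁻¹ := keyv u
        _ ≤ _ := by linarith
    · calc w L u = ((max 1 (L - u) : ℕ):ℝ)⁻¹ := by rw [w, hmin]
        _ ≤ 2*(((L-u:ℕ):ℝ)+1)⁻¹ := keyv (L - u)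
        _ ≤ _ := by linarith
  have hrefl : ∑ u ∈ range L, (((L-u:ℕ):ℝ)+1)⁻¹ ≤ ∑ u ∈ range L, ((u:ℝ)+1)⁻¹ := by
    rw [← Finset.sum_range_reflect (fun u => (((L-u:ℕ):ℝ)+1)⁻¹) L]
    apply Finset.sum_le_sum
    intro i hi
    rw [Finset.mem_range] at hi
    rw [show L - (L - 1 - i) = i + 1 by omega]
    have : ((i:ℝ)+1) ≤ ((i+1:ℕ):ℝ)+1 := by push_cast; linarith
    exact inv_anti₀ (by positivity) this
  have hsum : ∑ u ∈ range L, w L u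
      ≤ ∑ u ∈ range L, (2*((u:ℝ)+1)⁻¹ + 2*(((L-u:ℕ):ℝ)+1)⁻¹) :=
    Finset.sum_le_sum fun u _ => hterm u
  rw [Finset.sum_add_distrib, ← Finset.mul_sum, ← Finset.mul_sum] at hsum
  have hlog2 : (2:ℝ) ≤ Real.log L := by
    have h8 : Real.log 8 ≤ Real.log L := by
      apply Real.log_le_log (by norm_num)
      exact_mod_cast hL
    have he : Real.log 8 = 3 * Real.log 2 := by
      rw [show (8:ℝ) = 2^3 by norm_num, Real.log_pow]
      push_cast; ring
    nlinarith [Real.log_two_gt_d9]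
  nlinarith [hH, hrefl, hsum]

end Stmt11

theorem stmt_11 :
    ∃ C : ℝ, 0 < C ∧ ∀ L : ℕ, 8 ≤ L → 4 ∣ L →
      ∀ lam : Fin L → ℝ,
        (∀ j : Fin L, lam j = -2 * Real.cos (2 * Real.pi * (j : ℕ) / L)) →
        ∑ j : Fin L, ∑ k : Fin L,
            (if lam j ≠ lam k then |lam j - lam k|⁻¹ else 0)
          ≤ C * (L : ℝ) ^ 2 * Real.log L ^ 2 := by
  refine ⟨72, by norm_num, ?_⟩
  intro L hL hL4 lam hlam
  have hL0 : 0 < L := by omega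
  have hL2 : 2 ∣ L := dvd_trans (by norm_num) hL4
  have hstep : ∑ j : Fin L, ∑ k : Fin L,
      (if lam j ≠ lam k then |lam j - lam k|⁻¹ else 0)
      ≤ (L:ℝ)^2 * ∑ j : Fin L, ∑ k : Fin L,
          Stmt11.w L ((j.1 + k.1) % L) * Stmt11.w L ((j.1 + L - k.1) % L) := by
    rw [Finset.mul_sum]
    apply Finset.sum_le_sum
    intro j _
    rw [Finset.mul_sum]
    apply Finset.sum_le_sum
    intro k _
    by_cases hjk : lam j = lam k
    · rw [if_neg (by simpa using hjk)]
      have h1 := Stmt11.w_pos L ((j.1 + k.1) % L)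
      have h2 := Stmt11.w_pos L ((j.1 + L - k.1) % L)
      positivity
    · rw [if_pos hjk]
      have hs : (j.1 + k.1) % L ≠ 0 := by
        intro h0
        apply hjk
        have hj2 := j.2
        have hk2 := k.2
        have hcase : j.1 + k.1 = 0 ∨ j.1 + k.1 = L := by
          rcases Nat.lt_or_ge (j.1 + k.1) L with h | h
          · left; rwa [Nat.mod_eq_of_lt h] at h0
          · right
            rw [Nat.mod_eq_sub_mod h, Nat.mod_eq_of_lt (by omega)] at h0
            omega
        rcases hcase with hcase | hcase
        · have : j = k := by
            apply Fin.ext; omega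
          rw [this]
        · rw [hlam j, hlam k]
          have hsum : (j.1:ℝ) + (k.1:ℝ) = L := by exact_mod_cast hcase
          have hLR : (0:ℝ) < L := by exact_mod_cast hL0
          congr 1
          rw [show 2*Real.pi*((j:ℕ):ℝ)/L = 2*Real.pi - 2*Real.pi*((k:ℕ):ℝ)/L by
            field_simp
            linear_combination hsum, Real.cos_two_pi_sub]
      have ht : (j.1 + L - k.1) % L ≠ 0 := by
        intro h0
        apply hjk
        have hj2 := j.2
        have hk2 := k.2
        have hcase : j.1 + L - k.1 = L := by
          rcases Nat.lt_or_ge (j.1 + L - k.1) L with h | h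
          · rw [Nat.mod_eq_of_lt h] at h0; omega
          · rw [Nat.mod_eq_sub_mod h, Nat.mod_eq_of_lt (by omega)] at h0
            omega
        have : j = k := by apply Fin.ext; omega
        rw [this]
      have hkey := Stmt11.key L hL j.1 k.1 j.2 k.2 hs ht
      rw [hlam j, hlam k]
      exact hkey.trans_eq (mul_assoc _ _ _)
  have hcomb := Stmt11.comb L hL2 hL0 (Stmt11.w L) (fun n => (Stmt11.w_pos L n).le)
  have hsw := Stmt11.sumw L hL
  have hswnn : (0:ℝ) ≤ ∑ u ∈ Finset.range L, Stmt11.w L u :=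
    Finset.sum_nonneg fun u _ => (Stmt11.w_pos L u).le
  have hlognn : (0:ℝ) ≤ Real.log L := Real.log_nonneg (by exact_mod_cast Nat.one_le_of_lt hL)
  calc ∑ j : Fin L, ∑ k : Fin L, (if lam j ≠ lam k then |lam j - lam k|⁻¹ else 0)
      ≤ (L:ℝ)^2 * ∑ j : Fin L, ∑ k : Fin L,
          Stmt11.w L ((j.1 + k.1) % L) * Stmt11.w L ((j.1 + L - k.1) % L) := hstep
    _ ≤ (L:ℝ)^2 * (2 * (∑ u ∈ Finset.range L, Stmt11.w L u)^2) := by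
        apply mul_le_mul_of_nonneg_left hcomb (by positivity)
    _ ≤ (L:ℝ)^2 * (2 * (6 * Real.log L)^2) := by
        apply mul_le_mul_of_nonneg_left _ (by positivity)
        have := pow_le_pow_left₀ hswnn hsw 2
        linarith
    _ = 72 * (L:ℝ)^2 * Real.log L ^ 2 := by ring
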